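/- Let k be a field and H a Hopf algebra over k with comultiplication Δ(h) = h₁ ⊗ h₂ (Sweedler notation). Regard H as a left module over the convolution algebra H* via f ▷ h := h₁·f(h₂). Fix χ ∈ H* and define T : H → H by T(h) = χ(h₁)·h₂. Then T is an H*-module map, and (H, T) is a generic Rota-Baxter paired H*-module of weight −1 (i.e., for every k-linear map P : H* → H*, P(f) ▷ T(h) = T(P(f) ▷ h) + T(f ▷ T(h)) − T(f ▷ h) for all f ∈ H*, h ∈ H) if and only if χ∗χ = χ in the convolution algebra H*. -/

import Mathlib

open scoped TensorProduct

namespace Stmt12Aux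

variable {k H : Type*} [Field k] [Ring H] [HopfAlgebra k H]

/-- The action `f ▷ h = h₁ f(h₂)` as a linear map. -/
noncomputable def actL (f : H →ₗ[k] k) : H →ₗ[k] H :=
  (TensorProduct.rid k H).toLinearMap ∘ₗ
    (TensorProduct.map (LinearMap.id : H →ₗ[k] H) f) ∘ₗ (Coalgebra.comul : H →ₗ[k] H ⊗[k] H)

/-- The map `T(h) = χ(h₁) h₂` as a linear map. -/
noncomputable def TL (χ : H →ₗ[k] k) : H →ₗ[k] H :=
  (TensorProduct.lid k H).toLinearMap ∘ₗ
    (TensorProduct.map χ (LinearMap.id : H →ₗ[k] H)) ∘ₗ (Coalgebra.comul : H →ₗ[k] H ⊗[k] H)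

lemma actL_repr (f : H →ₗ[k] k) {h : H} {ι : Type*} (r : Coalgebra.Repr k h ι) :
    actL f h = ∑ i ∈ r.index, f (r.right i) • r.left i := by
  simp only [actL, LinearMap.coe_comp, Function.comp_apply, LinearEquiv.coe_coe]
  rw [show (Coalgebra.comul : H →ₗ[k] H ⊗[k] H) h = _ from r.eq.symm]
  simp [map_sum]

lemma TL_repr (χ : H →ₗ[k] k) {h : H} {ι : Type*} (r : Coalgebra.Repr k h ι) :
    TL χ h = ∑ i ∈ r.index, χ (r.left i) • r.right i := by
  simp only [TL, LinearMap.coe_comp, Function.comp_apply, LinearEquiv.coe_coe]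
  rw [show (Coalgebra.comul : H →ₗ[k] H ⊗[k] H) h = _ from r.eq.symm]
  simp [map_sum]

/-- The convolution `χ ∗ χ` evaluated via a representation. -/
lemma conv_repr (χ : H →ₗ[k] k) {h : H} {ι : Type*} (r : Coalgebra.Repr k h ι) :
    (TensorProduct.lid k k) (TensorProduct.map χ χ (Coalgebra.comul h)) =
      ∑ i ∈ r.index, χ (r.left i) * χ (r.right i) := by
  rw [show (Coalgebra.comul : H →ₗ[k] H ⊗[k] H) h = _ from r.eq.symm]
  simp [map_sum, smul_eq_mul]

/-- `act ε = id`. -/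
lemma sum_counit_smul {h : H} {ι : Type*} (r : Coalgebra.Repr k h ι) :
    ∑ i ∈ r.index, (Coalgebra.counit : H →ₗ[k] k) (r.right i) • r.left i = h := by
  have := congrArg (TensorProduct.rid k H) (Coalgebra.sum_tmul_counit_eq r)
  rw [map_sum] at this
  simp only [TensorProduct.rid_tmul, one_smul, LinearEquiv.coe_coe] at this
  exact this

/-- `act ε = id`. -/
lemma actL_counit (h : H) : actL (Coalgebra.counit : H →ₗ[k] k) h = h := by
  rw [actL_repr (Coalgebra.counit) (Coalgebra.Repr.arbitrary k h)]
  exact sum_counit_smul _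

/-- `ε ∘ T = χ`. -/
lemma counit_TL (χ : H →ₗ[k] k) (h : H) :
    (Coalgebra.counit : H →ₗ[k] k) (TL χ h) = χ h := by
  set r := Coalgebra.Repr.arbitrary k h
  rw [TL_repr χ r, map_sum]
  simp only [map_smul, smul_eq_mul]
  have := congrArg χ (sum_counit_smul r)
  rw [map_sum] at this
  simp only [map_smul, smul_eq_mul] at this
  rw [← this]
  exact Finset.sum_congr rfl fun i _ => mul_comm _ _

/-- `χ ∘ T = χ ∗ χ`. -/
lemma chi_TL (χ : H →ₗ[k] k) (h : H) :
    χ (TL χ h) =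
      (TensorProduct.lid k k) (TensorProduct.map χ χ (Coalgebra.comul h)) := by
  set r := Coalgebra.Repr.arbitrary k h
  rw [TL_repr χ r, map_sum, conv_repr χ r]
  simp [smul_eq_mul]

/-- `T` commutes with the action (coassociativity). -/
lemma actL_TL_comm (χ f : H →ₗ[k] k) (h : H) :
    actL f (TL χ h) = TL χ (actL f h) := by
  classical
  set r := Coalgebra.Repr.arbitrary k h with hr
  set a₁ : (i : H × H) → Coalgebra.Repr k (r.left i) (H × H) :=
    fun i => Coalgebra.Repr.arbitrary k (r.left i) with ha₁
  set a₂ : (i : H × H) → Coalgebra.Repr k (r.right i) (H × H) :=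
    fun i => Coalgebra.Repr.arbitrary k (r.right i) with ha₂
  have key := Coalgebra.sum_tmul_tmul_eq r a₁ a₂
  -- apply the map  a ⊗ (b ⊗ c) ↦ χ(a) • (f(c) • b)
  set φ : H ⊗[k] (H ⊗[k] H) →ₗ[k] H :=
    (TensorProduct.lid k H).toLinearMap ∘ₗ
      TensorProduct.map χ
        ((TensorProduct.rid k H).toLinearMap ∘ₗ
          TensorProduct.map (LinearMap.id : H →ₗ[k] H) f) with hφ
  have key2 := congrArg φ key
  simp only [map_sum, hφ, LinearMap.coe_comp, Function.comp_apply, LinearEquiv.coe_coe,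
    TensorProduct.map_tmul, TensorProduct.rid_tmul, TensorProduct.lid_tmul,
    LinearMap.id_coe, id_eq, map_smul] at key2
  -- key2 : ∑ i ∑ j, χ ((a₁ i).left j) • f (r.right i) • (a₁ i).right j
  --      = ∑ i ∑ j, χ (r.left i) • f ((a₂ i).right j) • (a₂ i).left j
  calc actL f (TL χ h)
      = ∑ i ∈ r.index, χ (r.left i) •
          ∑ j ∈ (a₂ i).index, f ((a₂ i).right j) • (a₂ i).left j := by
        rw [TL_repr χ r, map_sum]
        exact Finset.sum_congr rfl fun i _ => by
          rw [map_smul, actL_repr f (a₂ i)]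
    _ = ∑ i ∈ r.index, ∑ j ∈ (a₂ i).index,
          χ (r.left i) • f ((a₂ i).right j) • (a₂ i).left j := by
        simp [Finset.smul_sum]
    _ = ∑ i ∈ r.index, ∑ j ∈ (a₁ i).index,
          χ ((a₁ i).left j) • f (r.right i) • (a₁ i).right j := key2.symm
    _ = ∑ i ∈ r.index, f (r.right i) •
          ∑ j ∈ (a₁ i).index, χ ((a₁ i).left j) • (a₁ i).right j := by
        simp only [Finset.smul_sum]
        exact Finset.sum_congr rfl fun i _ => Finset.sum_congr rfl fun j _ => by
          rw [smul_comm]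
    _ = TL χ (actL f h) := by
        rw [actL_repr f r, map_sum]
        exact (Finset.sum_congr rfl fun i _ => by
          rw [map_smul, TL_repr χ (a₁ i)]).symm

/-- If `χ ∗ χ = χ` then `T ∘ T = T`. -/
lemma TL_idem (χ : H →ₗ[k] k)
    (hχ : ∀ h : H, (TensorProduct.lid k k)
        (TensorProduct.map χ χ (Coalgebra.comul h)) = χ h) (h : H) :
    TL χ (TL χ h) = TL χ h := by
  classical
  set r := Coalgebra.Repr.arbitrary k h with hr
  set a₁ : (i : H × H) → Coalgebra.Repr k (r.left i) (H × H) :=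
    fun i => Coalgebra.Repr.arbitrary k (r.left i) with ha₁
  set a₂ : (i : H × H) → Coalgebra.Repr k (r.right i) (H × H) :=
    fun i => Coalgebra.Repr.arbitrary k (r.right i) with ha₂
  have key := Coalgebra.sum_tmul_tmul_eq r a₁ a₂
  -- apply the map  a ⊗ (b ⊗ c) ↦ χ(a) • (χ(b) • c)
  set ψ : H ⊗[k] (H ⊗[k] H) →ₗ[k] H :=
    (TensorProduct.lid k H).toLinearMap ∘ₗ
      TensorProduct.map χ
        ((TensorProduct.lid k H).toLinearMap ∘ₗ
          TensorProduct.map χ (LinearMap.id : H →ₗ[k] H)) with hψ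
  have key2 := congrArg ψ key
  simp only [map_sum, hψ, LinearMap.coe_comp, Function.comp_apply, LinearEquiv.coe_coe,
    TensorProduct.map_tmul, TensorProduct.lid_tmul,
    LinearMap.id_coe, id_eq, map_smul] at key2
  calc TL χ (TL χ h)
      = ∑ i ∈ r.index, χ (r.left i) •
          ∑ j ∈ (a₂ i).index, χ ((a₂ i).left j) • (a₂ i).right j := by
        rw [TL_repr χ r, map_sum]
        exact Finset.sum_congr rfl fun i _ => by
          rw [map_smul, TL_repr χ (a₂ i)]
    _ = ∑ i ∈ r.index, ∑ j ∈ (a₂ i).index,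
          χ (r.left i) • χ ((a₂ i).left j) • (a₂ i).right j := by
        simp [Finset.smul_sum]
    _ = ∑ i ∈ r.index, ∑ j ∈ (a₁ i).index,
          χ ((a₁ i).left j) • χ ((a₁ i).right j) • r.right i := key2.symm
    _ = ∑ i ∈ r.index, χ (r.left i) • r.right i := by
        refine Finset.sum_congr rfl fun i _ => ?_
        have : ∑ j ∈ (a₁ i).index, χ ((a₁ i).left j) * χ ((a₁ i).right j)
            = χ (r.left i) := by
          rw [← conv_repr χ (a₁ i)]
          exact hχ (r.left i)
        calc ∑ j ∈ (a₁ i).index, χ ((a₁ i).left j) • χ ((a₁ i).right j) • r.right i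
            = (∑ j ∈ (a₁ i).index, χ ((a₁ i).left j) * χ ((a₁ i).right j)) • r.right i := by
              rw [Finset.sum_smul]
              exact Finset.sum_congr rfl fun j _ => (mul_smul _ _ _).symm
          _ = χ (r.left i) • r.right i := by rw [this]
    _ = TL χ h := (TL_repr χ r).symm

end Stmt12Aux

/-- let `H` be a Hopf algebra over a field `k`, regarded as a left
module over the convolution algebra `H*` via `f ▷ h = h₁ f(h₂)`. For `χ ∈ H*`
define `T(h) = χ(h₁) h₂`. Then `T` is an `H*`-module map, and `(H, T)` is a
generic Rota-Baxter paired `H*`-module of weight `-1` iff `χ ∗ χ = χ` in the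
convolution algebra `H*`. -/
theorem stmt12 {k H : Type*} [Field k] [Ring H] [HopfAlgebra k H]
    (χ : H →ₗ[k] k) :
    let act : (H →ₗ[k] k) → H → H := fun f h =>
      (TensorProduct.rid k H)
        (TensorProduct.map (LinearMap.id : H →ₗ[k] H) f (Coalgebra.comul h))
    let T : H → H := fun h =>
      (TensorProduct.lid k H)
        (TensorProduct.map χ (LinearMap.id : H →ₗ[k] H) (Coalgebra.comul h))
    (∀ (f : H →ₗ[k] k) (h : H), act f (T h) = T (act f h)) ∧
    ((∀ (P : (H →ₗ[k] k) →ₗ[k] (H →ₗ[k] k)) (f : H →ₗ[k] k) (h : H),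
        act (P f) (T h) = T (act (P f) h) + T (act f (T h)) - T (act f h)) ↔
      (∀ h : H, (TensorProduct.lid k k)
          (TensorProduct.map χ χ (Coalgebra.comul h)) = χ h)) := by
  intro act T
  have hact : ∀ (f : H →ₗ[k] k) (h : H), act f h = Stmt12Aux.actL f h := fun _ _ => rfl
  have hT : ∀ h : H, T h = Stmt12Aux.TL χ h := fun _ => rfl
  have comm : ∀ (f : H →ₗ[k] k) (h : H), act f (T h) = T (act f h) := by
    intro f h
    rw [hT, hact, hact, hT, Stmt12Aux.actL_TL_comm]
  refine ⟨comm, ?_, ?_⟩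
  · -- forward: instantiate at P = id, f = counit
    intro hyp h
    have h1 := hyp LinearMap.id (Coalgebra.counit : H →ₗ[k] k) h
    simp only [LinearMap.id_coe, id_eq] at h1
    -- h1 : act ε (T h) = T (act ε h) + T (act ε (T h)) - T (act ε h)
    have hε : ∀ x : H, act (Coalgebra.counit : H →ₗ[k] k) x = x := fun x => by
      rw [hact]; exact Stmt12Aux.actL_counit x
    simp only [hε] at h1
    -- h1 : T h = T h + T (T h) - T h
    have hTT : T (T h) = T h := by
      have h2 : T h + T (T h) - T h = T h := h1.symm
      simpa [add_sub_cancel_left] using h2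
    -- apply ε
    have e1 : (Coalgebra.counit : H →ₗ[k] k) (T (T h)) = χ (T h) := by
      rw [hT (T h)]; exact Stmt12Aux.counit_TL χ (T h)
    have e2 : (Coalgebra.counit : H →ₗ[k] k) (T h) = χ h := by
      rw [hT h]; exact Stmt12Aux.counit_TL χ h
    have e3 : χ (T h) = (TensorProduct.lid k k)
        (TensorProduct.map χ χ (Coalgebra.comul h)) := by
      rw [hT h]; exact Stmt12Aux.chi_TL χ h
    rw [← e3, ← e1, hTT, e2]
  · -- backward
    intro hχ P f h
    rw [comm (P f) h]
    have : act f (T h) = T (act f h) := comm f h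
    rw [this]
    have idem : T (T (act f h)) = T (act f h) := by
      rw [hT (act f h), hT (Stmt12Aux.TL χ (act f h))]
      exact Stmt12Aux.TL_idem χ hχ (act f h)
    rw [idem]
    exact (add_sub_cancel_right _ _).symm
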